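/- Let F be a non-abelian free group on a generating set S and let α : F³ → ℝ be a 3-cocycle (δ³α = 0) satisfying α(g,h,1) = α(g,1,h) = α(1,g,h) = α(g,g⁻¹,h) = 0 for all g, h ∈ F. Define ζ(g,g',h) = Σ_{j=1}^k α(x_j, x_{j+1}⋯x_k g', h), where g = x₁⋯x_k is the reduced word representing g in the letters S ∪ S⁻¹, and η(g,h) = ζ(g,1,h). Then α(g,h,i) + δ²η(g,h,i) = 0 for all g, h, i ∈ F; that is, α = δ²ε for ε = −η. Along the way: α(g,h,i) = ζ(g,h,i) − ζ(g,1,hi) + ζ(g,1,h), and ζ(g,h,i) + ζ(h,1,i) − ζ(gh,1,i) = 0 for all g, h, i. -/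

import Mathlib

/-! Common definitions: free groups, reduced products, (bounded) cochains,
decompositions of a free group, Brooks and Rolli quasimorphisms. -/

section Preamble

variable {α : Type} [DecidableEq α]

/-- Word length of an element of a free group (length of its reduced word). -/
def wlen (g : FreeGroup α) : ℕ := g.toWord.length

/-- A product `g = g₁ ⋯ g_k` is reduced (no cancellation) if the word lengths add up. -/
def ReducedProd (l : List (FreeGroup α)) : Prop :=
  wlen l.prod = (l.map wlen).sum

/-- Inhomogeneous coboundary `δ¹φ(g,h) = φ(g) + φ(h) − φ(gh)`. -/
def d1 (φ : FreeGroup α → ℝ) (g h : FreeGroup α) : ℝ := φ g + φ h - φ (g * h)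

/-- Inhomogeneous coboundary `δ²η`. -/
def d2 (η : FreeGroup α → FreeGroup α → ℝ) (g h i : FreeGroup α) : ℝ :=
  η h i - η (g * h) i + η g (h * i) - η g h

/-- Inhomogeneous coboundary `δ³β`. -/
def d3 (β : FreeGroup α → FreeGroup α → FreeGroup α → ℝ) (g h i j : FreeGroup α) : ℝ :=
  β h i j - β (g * h) i j + β g (h * i) j - β g h (i * j) + β g h i

/-- A quasimorphism on the free group. -/
def IsQuasimorphism (φ : FreeGroup α → ℝ) : Prop :=
  ∃ D > (0 : ℝ), ∀ g h : FreeGroup α, |d1 φ g h| < D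

/-- A symmetric map: `φ(g⁻¹) = −φ(g)`. -/
def IsSymmetricMap (φ : FreeGroup α → ℝ) : Prop :=
  ∀ g : FreeGroup α, φ g⁻¹ = -φ g

/-- Longest common initial sequence of two lists. -/
def commonPrefix {β : Type} [DecidableEq β] : List β → List β → List β
  | a :: as, b :: bs => if a = b then a :: commonPrefix as bs else []
  | _, _ => []

/-- Reversed, entrywise-inverted list: `(g₁, …, g_k) ↦ (g_k⁻¹, …, g₁⁻¹)`. -/
def seqInv (l : List (FreeGroup α)) : List (FreeGroup α) :=
  (l.map fun x => x⁻¹).reverse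

/-- `(c̲₁⁻¹)`: the common initial sequence of `Δ(g)` and `Δ(gh)`. -/
def cSeq1 (D : FreeGroup α → List (FreeGroup α)) (g h : FreeGroup α) : List (FreeGroup α) :=
  commonPrefix (D g) (D (g * h))

/-- `(c̲₂⁻¹)`: the common initial sequence of `Δ(g⁻¹)` and `Δ(h)`. -/
def cSeq2 (D : FreeGroup α → List (FreeGroup α)) (g h : FreeGroup α) : List (FreeGroup α) :=
  commonPrefix (D g⁻¹) (D h)

/-- `(c̲₃⁻¹)`: the common initial sequence of `Δ(h⁻¹)` and `Δ(h⁻¹g⁻¹)`. -/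
def cSeq3 (D : FreeGroup α → List (FreeGroup α)) (g h : FreeGroup α) : List (FreeGroup α) :=
  commonPrefix (D h⁻¹) (D (h⁻¹ * g⁻¹))

/-- `(r̲₁)`: middle part of `Δ(g) = (c̲₁⁻¹)·(r̲₁)·(c̲₂)`. -/
def rSeq1 (D : FreeGroup α → List (FreeGroup α)) (g h : FreeGroup α) : List (FreeGroup α) :=
  ((D g).drop (cSeq1 D g h).length).take
    ((D g).length - (cSeq1 D g h).length - (cSeq2 D g h).length)

/-- `(r̲₂)`: middle part of `Δ(h) = (c̲₂⁻¹)·(r̲₂)·(c̲₃)`. -/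
def rSeq2 (D : FreeGroup α → List (FreeGroup α)) (g h : FreeGroup α) : List (FreeGroup α) :=
  ((D h).drop (cSeq2 D g h).length).take
    ((D h).length - (cSeq2 D g h).length - (cSeq3 D g h).length)

/-- `(r̲₃)`: middle part of `Δ(h⁻¹g⁻¹) = (c̲₃⁻¹)·(r̲₃)·(c̲₁)`. -/
def rSeq3 (D : FreeGroup α → List (FreeGroup α)) (g h : FreeGroup α) : List (FreeGroup α) :=
  ((D (h⁻¹ * g⁻¹)).drop (cSeq3 D g h).length).take
    ((D (h⁻¹ * g⁻¹)).length - (cSeq3 D g h).length - (cSeq1 D g h).length)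

/-- A decomposition `Δ` of the free group `F` into pieces `P` (Definition 3.1). -/
structure Decomp (α : Type) [DecidableEq α] where
  /-- the set of pieces -/
  pieces : Set (FreeGroup α)
  /-- the decomposition map `Δ` -/
  D : FreeGroup α → List (FreeGroup α)
  /-- the uniform bound `R` on the r-parts of `Δ`-triangles -/
  R : ℕ
  R_pos : 0 < R
  pieces_symm : ∀ p ∈ pieces, p⁻¹ ∈ pieces
  one_notin_pieces : (1 : FreeGroup α) ∉ pieces
  mem_pieces : ∀ g : FreeGroup α, ∀ p ∈ D g, p ∈ pieces
  prod_eq : ∀ g : FreeGroup α, (D g).prod = g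
  reduced : ∀ g : FreeGroup α, ReducedProd (D g)
  inv_eq : ∀ g : FreeGroup α, D g⁻¹ = seqInv (D g)
  infix_closed : ∀ (g : FreeGroup α) (l₁ l₂ l₃ : List (FreeGroup α)),
    D g = l₁ ++ l₂ ++ l₃ → D l₂.prod = l₂
  triangle₁ : ∀ g h : FreeGroup α, D g = cSeq1 D g h ++ rSeq1 D g h ++ seqInv (cSeq2 D g h)
  triangle₂ : ∀ g h : FreeGroup α, D h = cSeq2 D g h ++ rSeq2 D g h ++ seqInv (cSeq3 D g h)
  triangle₃ : ∀ g h : FreeGroup α,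
    D (h⁻¹ * g⁻¹) = cSeq3 D g h ++ rSeq3 D g h ++ seqInv (cSeq1 D g h)
  rBound₁ : ∀ g h : FreeGroup α, (rSeq1 D g h).length ≤ R
  rBound₂ : ∀ g h : FreeGroup α, (rSeq2 D g h).length ≤ R
  rBound₃ : ∀ g h : FreeGroup α, (rSeq3 D g h).length ≤ R

/-- The `Δ`-decomposable map `φ_{λ,Δ}(g) = Σ_j λ(g_j)`. -/
def decQM (D : FreeGroup α → List (FreeGroup α)) (lam : FreeGroup α → ℝ)
    (g : FreeGroup α) : ℝ :=
  ((D g).map lam).sum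

/-- `φ` is a `Δ`-decomposable quasimorphism (Definition 3.8). -/
def IsDecomposable (dec : Decomp α) (φ : FreeGroup α → ℝ) : Prop :=
  ∃ lam : FreeGroup α → ℝ,
    (∃ B : ℝ, ∀ p ∈ dec.pieces, |lam p| ≤ B) ∧
    (∀ p ∈ dec.pieces, lam p⁻¹ = -lam p) ∧
    φ = decQM dec.D lam

/-- Agreement (as an extended natural number) of two sequences:
`⊤` if they are equal, otherwise the length of their common initial sequence. -/
def seqAgree {β : Type} [DecidableEq β] (l l' : List β) : ℕ∞ :=
  if l = l' then ⊤ else ((commonPrefix l l').length : ℕ∞)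

/-- The quantity `N_Δ((g,h),(g',h'))` measuring how much the `Δ`-triangles of the two
pairs agree around their centres. -/
noncomputable def NDelta (D : FreeGroup α → List (FreeGroup α))
    (p q : FreeGroup α × FreeGroup α) : ℕ∞ :=
  if p = q then ⊤
  else if rSeq1 D p.1 p.2 = rSeq1 D q.1 q.2 ∧ rSeq2 D p.1 p.2 = rSeq2 D q.1 q.2 ∧
            rSeq3 D p.1 p.2 = rSeq3 D q.1 q.2 then
    min (seqAgree (seqInv (cSeq1 D p.1 p.2)) (seqInv (cSeq1 D q.1 q.2)))
      (min (seqAgree (seqInv (cSeq2 D p.1 p.2)) (seqInv (cSeq2 D q.1 q.2)))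
        (seqAgree (seqInv (cSeq3 D p.1 p.2)) (seqInv (cSeq3 D q.1 q.2))))
  else 0

/-- A bounded symmetric `2`-cocycle `ω` is `Δ`-continuous (Definition 3.12). -/
def DeltaContinuousCocycle (D : FreeGroup α → List (FreeGroup α))
    (ω : FreeGroup α → FreeGroup α → ℝ) : Prop :=
  ∃ s : ℕ → ℝ, (∀ j, 0 ≤ s j) ∧ Summable s ∧
    ∀ p q : FreeGroup α × FreeGroup α, p ≠ q → ∀ N : ℕ, NDelta D p q = (N : ℕ∞) →
      |ω p.1 p.2 - ω q.1 q.2| ≤ s N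

/-- A quasimorphism `ψ` is `Δ`-continuous: it is symmetric and `δ¹ψ` is `Δ`-continuous. -/
def DeltaContinuousQM (D : FreeGroup α → List (FreeGroup α)) (ψ : FreeGroup α → ℝ) : Prop :=
  IsSymmetricMap ψ ∧ IsQuasimorphism ψ ∧ DeltaContinuousCocycle D (d1 ψ)

/-- `ζ`-type sums: `zetaL A (g₁,…,g_k) g' h = Σ_j A(g_j, g_{j+1}⋯g_k·g', h)`. -/
def zetaL (A : FreeGroup α → FreeGroup α → FreeGroup α → ℝ) :
    List (FreeGroup α) → FreeGroup α → FreeGroup α → ℝ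
  | [], _, _ => 0
  | p :: rest, g', h => A p (rest.prod * g') h + zetaL A rest g' h

/-- `ζ(g,g',h) = Σ_j φ(g_j)·ω(g_{j+1}⋯g_k·g', h)` for `Δ(g) = (g₁,…,g_k)`. -/
def zetaD (D : FreeGroup α → List (FreeGroup α)) (φ : FreeGroup α → ℝ)
    (ω : FreeGroup α → FreeGroup α → ℝ) (g g' h : FreeGroup α) : ℝ :=
  zetaL (fun p u v => φ p * ω u v) (D g) g' h

/-- `w` is a subword of `g` (as reduced words). -/
def Subword (w g : FreeGroup α) : Prop :=
  w.toWord <:+: g.toWord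

/-- `w` is non self-overlapping: there are no reduced words `x, y` with `x` nontrivial
such that `w = xyx` as a reduced word. -/
def NonSelfOverlapping (w : FreeGroup α) : Prop :=
  ¬∃ x y : FreeGroup α, x ≠ 1 ∧ w = x * y * x ∧ ReducedProd [x, y, x]

/-- `ν_w(g)`: the number of occurrences of `w` as a subword of the reduced word `g`. -/
def occCount (w g : FreeGroup α) : ℕ :=
  ((List.range (g.toWord.length + 1)).filter
    (fun s => decide ((g.toWord.drop s).take w.toWord.length = w.toWord))).length

/-- The Brooks counting function `φ_w = ν_w − ν_{w⁻¹}`. -/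
noncomputable def brooksQM (w : FreeGroup α) (g : FreeGroup α) : ℝ :=
  (occCount w g : ℝ) - (occCount w⁻¹ g : ℝ)

/-- `φ` is a Brooks counting quasimorphism on some non self-overlapping word. -/
def IsBrooksQM (φ : FreeGroup α → ℝ) : Prop :=
  ∃ w : FreeGroup α, NonSelfOverlapping w ∧ φ = brooksQM w

/-- The interleaved list `(u₁, w^{ε₁}, u₂, …, u_{k−1}, w^{ε_{k−1}}, u_k)` built from
`us = (u₁,…,u_k)` and signs `eps = (ε₁,…,ε_{k−1})`. -/
def wfacList (w : FreeGroup α) : List (FreeGroup α) → List Bool → List (FreeGroup α)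
  | [], _ => []
  | [u], _ => [u]
  | u :: us, [] => u :: wfacList w us []
  | u :: us, e :: eps => u :: (if e then w else w⁻¹) :: wfacList w us eps

/-- `RolliWord l` : `l = ((n₁,m₁),…,(n_k,m_k))` encodes the normal form
`x_{n₁}^{m₁} ⋯ x_{n_k}^{m_k}` (all `m_j ≠ 0`, no consecutive equal indices). -/
def RolliWord {n : ℕ} (l : List (Fin n × ℤ)) : Prop :=
  (∀ p ∈ l, p.2 ≠ 0) ∧ l.Chain' fun p q => p.1 ≠ q.1

/-- The element `x_{n₁}^{m₁} ⋯ x_{n_k}^{m_k}` encoded by `l`. -/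
def rolliProd {n : ℕ} (l : List (Fin n × ℤ)) : FreeGroup (Fin n) :=
  (l.map fun p => FreeGroup.of p.1 ^ p.2).prod

/-- `φ` is a Rolli quasimorphism. -/
def IsRolliQM {n : ℕ} (φ : FreeGroup (Fin n) → ℝ) : Prop :=
  ∃ lam : Fin n → ℤ → ℝ,
    (∀ j, ∃ B : ℝ, ∀ m : ℤ, |lam j m| ≤ B) ∧
    (∀ j m, lam j (-m) = -lam j m) ∧
    φ 1 = 0 ∧
    ∀ l : List (Fin n × ℤ), RolliWord l → φ (rolliProd l) = (l.map fun p => lam p.1 p.2).sum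

/-- The list of letters (as group elements) of the reduced word representing `g`. -/
def letters (g : FreeGroup α) : List (FreeGroup α) :=
  g.toWord.map fun p => FreeGroup.mk [p]

/-- `d` is the common 2-path of `(g,h)`: `g = t₁⁻¹d` and `h = d⁻¹t₂` as reduced words,
with the tripod condition that `gh = t₁⁻¹t₂` is also reduced. -/
def IsCommon2Path (g h d : FreeGroup α) : Prop :=
  ∃ t₁ t₂ : FreeGroup α, g = t₁⁻¹ * d ∧ h = d⁻¹ * t₂ ∧
    ReducedProd [t₁⁻¹, d] ∧ ReducedProd [d⁻¹, t₂] ∧ ReducedProd [t₁⁻¹, t₂]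

/-- Case (a) of the alignment of `g, h, i` (Figure 4a). -/
def Align3A (g h i : FreeGroup α) : Prop :=
  ∃ t₁ t₂ t₃ t₄ t₅ : FreeGroup α,
    g = t₁ * t₂ ∧ h = t₂⁻¹ * t₃ * t₄ ∧ i = t₄⁻¹ * t₅ ∧
    ReducedProd [t₁, t₂] ∧ ReducedProd [t₂⁻¹, t₃, t₄] ∧ ReducedProd [t₄⁻¹, t₅] ∧
    ReducedProd [t₁, t₃, t₅]

/-- Case (b) of the alignment of `g, h, i` (Figure 4b). -/
def Align3B (g h i : FreeGroup α) : Prop :=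
  ∃ t₁ t₂ t₃ t₄ t₅ : FreeGroup α,
    g = t₁ * t₂ * t₃ ∧ h = t₃⁻¹ * t₄ ∧ i = t₄⁻¹ * t₂⁻¹ * t₅ ∧
    ReducedProd [t₁, t₂, t₃] ∧ ReducedProd [t₃⁻¹, t₄] ∧ ReducedProd [t₄⁻¹, t₂⁻¹, t₅] ∧
    ReducedProd [t₁, t₅]

/-- Case (c) of the alignment of `g, h, i` (Figure 4c), with common 3-path `c`. -/
def Align3C (g h i c : FreeGroup α) : Prop :=
  ∃ t₁ t₂ t₃ t₄ : FreeGroup α,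
    g = t₁⁻¹ * c * t₂ ∧ h = t₂⁻¹ * c⁻¹ * t₃ ∧ i = t₃⁻¹ * c * t₄ ∧
    ReducedProd [t₁⁻¹, c, t₂] ∧ ReducedProd [t₂⁻¹, c⁻¹, t₃] ∧ ReducedProd [t₃⁻¹, c, t₄] ∧
    ReducedProd [t₁⁻¹, t₃] ∧ ReducedProd [t₂⁻¹, t₄]

/-- `c` is the common 3-path of `(g,h,i)`: `c` in case (c), the identity otherwise. -/
def IsCommon3Path (g h i c : FreeGroup α) : Prop :=
  Align3C g h i c ∨ (c = 1 ∧ (Align3A g h i ∨ Align3B g h i))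

end Preamble


section Aux

variable {α : Type} [DecidableEq α]

/-- The tail of a reduced word is reduced. -/
lemma reduce_tail {p : α × Bool} {t : List (α × Bool)}
    (h : FreeGroup.reduce (p :: t) = p :: t) : FreeGroup.reduce t = t := by
  rw [FreeGroup.reduce.cons] at h
  cases hr : FreeGroup.reduce t with
  | nil =>
    rw [hr] at h
    have ht : t = [] := by simpa using h
    subst ht
    exact hr
  | cons hd tl =>
    rw [hr] at h
    change (if p.1 = hd.1 ∧ p.2 = !hd.2 then tl else p :: hd :: tl) = p :: t at h
    split_ifs at h with hc
    · exfalso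
      have hsub := (FreeGroup.reduce.red (L := t)).sublist
      have hle := hsub.length_le
      rw [hr] at hle
      rw [h] at hle
      simp at hle
    · have heq : hd :: tl = t := by simpa using h
      exact heq

lemma prod_map_mk (L : List (α × Bool)) :
    (L.map fun p => FreeGroup.mk [p]).prod = FreeGroup.mk L := by
  induction L with
  | nil => simp [FreeGroup.one_eq_mk]
  | cons p t ih => simp [ih, FreeGroup.mul_mk]

lemma letters_prod (g : FreeGroup α) : (letters g).prod = g := by
  rw [letters, prod_map_mk, FreeGroup.mk_toWord]

lemma zetaL_append (A : FreeGroup α → FreeGroup α → FreeGroup α → ℝ)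
    (l₁ l₂ : List (FreeGroup α)) (g' h : FreeGroup α) :
    zetaL A (l₁ ++ l₂) g' h = zetaL A l₁ (l₂.prod * g') h + zetaL A l₂ g' h := by
  induction l₁ with
  | nil => simp [zetaL]
  | cons p t ih => simp [zetaL, ih, mul_assoc]; ring

section WithA

variable (A : FreeGroup α → FreeGroup α → FreeGroup α → ℝ)
variable (hcoc : ∀ g g' h i : FreeGroup α, d3 A g g' h i = 0)
variable (hnorm : ∀ g h : FreeGroup α,
      A g h 1 = 0 ∧ A g 1 h = 0 ∧ A 1 g h = 0 ∧ A g g⁻¹ h = 0)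

include hcoc hnorm

lemma key1 (x u i : FreeGroup α) : A x⁻¹ (x * u) i = -A x u i := by
  have h := hcoc x x⁻¹ (x * u) i
  rw [d3] at h
  rw [mul_inv_cancel, inv_mul_cancel_left] at h
  rw [(hnorm (x * u) i).2.2.1, (hnorm x ((x*u)*i)).2.2.2] at h
  have h4 := (hnorm x (x*u)).2.2.2
  -- h : A x⁻¹ (x*u) i - 0 + A x u i - A x x⁻¹ ((x*u)*i) + A x x⁻¹ (x*u) = 0
  rw [h4] at h
  linarith

lemma key2 (x u i : FreeGroup α) : A x (x⁻¹ * u) i = -A x⁻¹ u i := by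
  have := key1 A hcoc hnorm x⁻¹ u i
  rwa [inv_inv] at this

/-- Claim 2 in list form. -/
lemma claim2_list (l : List (FreeGroup α)) (h i : FreeGroup α) :
    A l.prod h i = zetaL A l h i - zetaL A l 1 (h * i) + zetaL A l 1 h := by
  induction l with
  | nil => simp [zetaL, (hnorm h i).2.2.1]
  | cons p t ih =>
    have hc := hcoc p t.prod h i
    rw [d3] at hc
    simp only [zetaL, List.prod_cons, mul_one]
    linarith [hc, ih]

/-- Single-letter case of Claim 3. -/
lemma claim3_letter (p : α × Bool) (h i : FreeGroup α) :
    zetaL A (letters (FreeGroup.mk [p] * h)) 1 i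
      = A (FreeGroup.mk [p]) h i + zetaL A (letters h) 1 i := by
  cases hw : h.toWord with
  | nil =>
    have h1 : h = 1 := FreeGroup.toWord_eq_nil_iff.mp hw
    subst h1
    rw [mul_one]
    have : (FreeGroup.mk [p] : FreeGroup α).toWord = [p] := by
      rw [FreeGroup.toWord_mk, FreeGroup.reduce_singleton]
    simp [letters, this, zetaL, FreeGroup.one_eq_mk, (hnorm (FreeGroup.mk [p]) i).1]
  | cons q t =>
    have hred : FreeGroup.reduce (q :: t) = q :: t := by
      rw [← hw]; exact FreeGroup.reduce_toWord h
    have hredt : FreeGroup.reduce t = t := reduce_tail hred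
    have hmk : h = FreeGroup.mk (q :: t) := by rw [← hw, FreeGroup.mk_toWord]
    have htw : (FreeGroup.mk t : FreeGroup α).toWord = t := by
      rw [FreeGroup.toWord_mk, hredt]
    by_cases hc : p.1 = q.1 ∧ p.2 = !q.2
    · -- cancellation
      have hq : q = (p.1, !p.2) := by
        have h2 : q.2 = !p.2 := by rw [hc.2, Bool.not_not]
        exact Prod.ext_iff.mpr ⟨hc.1.symm, h2⟩
      have hinv : (FreeGroup.mk [p] : FreeGroup α)⁻¹ = FreeGroup.mk [q] := by
        rw [FreeGroup.inv_mk, hq]; rfl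
      have hh : h = (FreeGroup.mk [p])⁻¹ * FreeGroup.mk t := by
        rw [hinv, FreeGroup.mul_mk, hmk]; rfl
      have hxh : FreeGroup.mk [p] * h = FreeGroup.mk t := by
        rw [hh, mul_inv_cancel_left]
      have hh2 : h = FreeGroup.mk [q] * FreeGroup.mk t := by
        rw [hmk, FreeGroup.mul_mk]
        rfl
      have hlh : letters h = FreeGroup.mk [q] :: letters (FreeGroup.mk t) := by
        rw [letters, letters, htw, hmk, FreeGroup.toWord_mk, hred, List.map_cons]
      rw [hxh, hlh]
      simp only [zetaL, mul_one, letters_prod]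
      have hkey := key2 A hcoc hnorm (FreeGroup.mk [p]) (FreeGroup.mk t) i
      rw [hinv] at hkey
      rw [hh2]
      linarith [hkey]
    · -- no cancellation
      have hxw : (FreeGroup.mk [p] * h).toWord = p :: q :: t := by
        rw [hmk, FreeGroup.mul_mk]
        show (FreeGroup.mk (p :: q :: t)).toWord = p :: q :: t
        rw [FreeGroup.toWord_mk, FreeGroup.reduce.cons, hred]
        simp only [if_neg hc]
      have hlx : letters (FreeGroup.mk [p] * h) = FreeGroup.mk [p] :: letters h := by
        rw [letters, hxw, List.map_cons, ← hw]; rfl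
      rw [hlx]
      simp only [zetaL, mul_one, letters_prod]

/-- Claim 3. -/
lemma claim3 (g h i : FreeGroup α) :
    zetaL A (letters g) h i + zetaL A (letters h) 1 i
      = zetaL A (letters (g * h)) 1 i := by
  generalize hn : g.toWord.length = n
  induction n using Nat.strong_induction_on generalizing g h i with
  | _ n ih =>
    cases hw : g.toWord with
    | nil =>
      have h1 : g = 1 := FreeGroup.toWord_eq_nil_iff.mp hw
      subst h1
      simp [letters, FreeGroup.toWord_one, zetaL]
    | cons p t =>
      have hred : FreeGroup.reduce (p :: t) = p :: t := by
        rw [← hw]; exact FreeGroup.reduce_toWord g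
      have hredt : FreeGroup.reduce t = t := reduce_tail hred
      have htw : (FreeGroup.mk t : FreeGroup α).toWord = t := by
        rw [FreeGroup.toWord_mk, hredt]
      have hmk : g = FreeGroup.mk [p] * FreeGroup.mk t := by
        rw [FreeGroup.mul_mk]
        show g = FreeGroup.mk (p :: t)
        rw [← hw, FreeGroup.mk_toWord]
      have hlg : letters g = FreeGroup.mk [p] :: letters (FreeGroup.mk t) := by
        rw [letters, hw, List.map_cons, letters, htw]
      have hlen : t.length < n := by rw [← hn, hw]; simp
      have IH := ih t.length hlen (FreeGroup.mk t) h i (by rw [htw])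
      rw [hlg]
      simp only [zetaL, letters_prod]
      rw [add_assoc, IH]
      have := claim3_letter A hcoc hnorm p (FreeGroup.mk t * h) i
      rw [← mul_assoc, ← hmk] at this
      rw [this]

end WithA

end Aux

/-- Subsection 4.2: for a `3`-cocycle `A` with the normalization
`A(g,h,1) = A(g,1,h) = A(1,g,h) = A(g,g⁻¹,h) = 0`, setting
`ζ(g,g',h) = Σ_j A(x_j, x_{j+1}⋯x_k g', h)` over the letters of `g` and
`η(g,h) = ζ(g,1,h)`, one has `A + δ²η = 0`, i.e. `A = δ²(−η)`; along the way,
`A(g,h,i) = ζ(g,h,i) − ζ(g,1,hi) + ζ(g,1,h)` and `ζ(g,h,i) + ζ(h,1,i) − ζ(gh,1,i) = 0`. -/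
theorem three_cocycle_coboundary {α : Type} [Fintype α] [DecidableEq α]
    (hab : ∃ a b : α, a ≠ b)
    (A : FreeGroup α → FreeGroup α → FreeGroup α → ℝ)
    (hcoc : ∀ g g' h i : FreeGroup α, d3 A g g' h i = 0)
    (hnorm : ∀ g h : FreeGroup α,
      A g h 1 = 0 ∧ A g 1 h = 0 ∧ A 1 g h = 0 ∧ A g g⁻¹ h = 0) :
    (∀ g h i : FreeGroup α,
      A g h i + d2 (fun a b => zetaL A (letters a) 1 b) g h i = 0) ∧
    (∀ g h i : FreeGroup α,
      A g h i = zetaL A (letters g) h i - zetaL A (letters g) 1 (h * i) +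
        zetaL A (letters g) 1 h) ∧
    (∀ g h i : FreeGroup α,
      zetaL A (letters g) h i + zetaL A (letters h) 1 i -
        zetaL A (letters (g * h)) 1 i = 0) := by
  have c2 : ∀ g h i : FreeGroup α,
      A g h i = zetaL A (letters g) h i - zetaL A (letters g) 1 (h * i) +
        zetaL A (letters g) 1 h := by
    intro g h i
    have := claim2_list A hcoc hnorm (letters g) h i
    rwa [letters_prod] at this
  have c3 : ∀ g h i : FreeGroup α,
      zetaL A (letters g) h i + zetaL A (letters h) 1 i -
        zetaL A (letters (g * h)) 1 i = 0 := by
    intro g h i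
    have := claim3 A hcoc hnorm g h i
    linarith
  refine ⟨?_, c2, c3⟩
  intro g h i
  have h2 := c2 g h i
  have h3 := c3 g h i
  simp only [d2]
  linarith
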